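/- Let n, m, t be positive integers with t ≤ n, and let f : 𝔽₂ⁿ → ℤ_{2^m} be a generalized Boolean function. Then f is a t-th order correlation-immune function if and only if for every vector c ∈ 𝔽₂ⁿ with 1 ≤ wt(c) ≤ t and every integer i with 1 ≤ i ≤ m, one has ∑_{x ∈ 𝔽₂ⁿ} ω_i^{f(x)} (−1)^{c·x} = 0, where ω_i = exp(2π√−1/2^i) is a primitive 2^i-th root of unity in ℂ, c·x = ∑_j c_j x_j (mod 2) is the inner product on 𝔽₂ⁿ, and wt(c) is the Hamming weight of c (the number of nonzero coordinates). -/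

import Mathlib

noncomputable section

open Finset

/-- Inner product modulo 2 on `𝔽₂ⁿ`. -/
def dotp {n : ℕ} (c x : Fin n → ZMod 2) : ZMod 2 := ∑ j, c j * x j

/-- Hamming weight of a vector in `𝔽₂ⁿ`. -/
def wt {n : ℕ} (c : Fin n → ZMod 2) : ℕ := (Finset.univ.filter fun j => c j ≠ 0).card

/-- `f` is `t`-th order correlation-immune: fixing any `t` coordinates does not
change the output distribution (counting form). -/
def CI {n : ℕ} {A : Type*} (t : ℕ) (f : (Fin n → ZMod 2) → A) : Prop :=
  ∀ S : Finset (Fin n), S.card = t → ∀ a : Fin n → ZMod 2, ∀ α : A,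
    2 ^ t * Nat.card {x : Fin n → ZMod 2 // f x = α ∧ ∀ j ∈ S, x j = a j}
      = Nat.card {x : Fin n → ZMod 2 // f x = α}

/-- Binary expansion of `k` as a vector in `𝔽₂ⁿ`, `k = ∑ x_j 2^j`. -/
def bin (n k : ℕ) : Fin n → ZMod 2 := fun j => ((k / 2 ^ (j : ℕ)) % 2 : ℕ)

/-- `ω i = exp(2π√-1 / 2^i)`, a primitive `2^i`-th root of unity in `ℂ`. -/
def ω (i : ℕ) : ℂ := Complex.exp (2 * Real.pi * Complex.I / 2 ^ i)

/-! ### Auxiliary lemmas -/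

lemma chi_add (a b : ZMod 2) : (-1:ℤ)^((a+b).val) = (-1:ℤ)^a.val * (-1:ℤ)^b.val := by
  revert a b; decide

lemma chi_add_one (a : ZMod 2) : (-1:ℤ)^((a+1).val) = -(-1:ℤ)^a.val := by
  revert a; decide

lemma zmod2_add_eq_zero (u v : ZMod 2) : u + v = 0 ↔ u = v := by revert u v; decide

lemma chi_sum {ι : Type*} (S : Finset ι) (g : ι → ZMod 2) :
    (-1:ℤ)^((∑ j ∈ S, g j).val) = ∏ j ∈ S, (-1:ℤ)^((g j).val) := by
  classical
  induction S using Finset.cons_induction with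
  | empty => simp
  | cons j S hj ih => rw [Finset.sum_cons, Finset.prod_cons, chi_add, ih]

/-- Indicator vector of a subset. -/
def ind {n : ℕ} (S : Finset (Fin n)) : Fin n → ZMod 2 := fun j => if j ∈ S then 1 else 0

lemma dotp_ind {n : ℕ} (S : Finset (Fin n)) (x : Fin n → ZMod 2) :
    dotp (ind S) x = ∑ j ∈ S, x j := by
  simp [dotp, ind, ite_mul, one_mul, zero_mul, Finset.sum_ite_mem, Finset.univ_inter]

lemma wt_ind {n : ℕ} (S : Finset (Fin n)) : wt (ind S) = S.card := by
  unfold wt ind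
  congr 1
  ext j
  by_cases h : j ∈ S <;> simp [h]

lemma ind_empty {n : ℕ} : ind (∅ : Finset (Fin n)) = 0 := by funext j; simp [ind]

/-- The basic signed count. -/
def W {n : ℕ} {A : Type*} [DecidableEq A] (f : (Fin n → ZMod 2) → A)
    (c : Fin n → ZMod 2) (α : A) : ℤ :=
  ∑ x : Fin n → ZMod 2, if f x = α then (-1:ℤ)^((dotp c x).val) else 0

lemma natCard_eq {n : ℕ} (p : (Fin n → ZMod 2) → Prop) [DecidablePred p] :
    (Nat.card {x : Fin n → ZMod 2 // p x} : ℤ)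
      = ∑ x : Fin n → ZMod 2, if p x then (1:ℤ) else 0 := by
  simp [Nat.card_eq_fintype_card, Fintype.card_subtype, Finset.sum_boole]

lemma W_zero_eq {n : ℕ} {A : Type*} [DecidableEq A] (f : (Fin n → ZMod 2) → A) (α : A) :
    W f 0 α = (Nat.card {x : Fin n → ZMod 2 // f x = α} : ℤ) := by
  have h : ∀ x : Fin n → ZMod 2, dotp 0 x = 0 := fun x => by simp [dotp]
  rw [natCard_eq (fun x : Fin n → ZMod 2 => f x = α)]
  unfold W
  refine Finset.sum_congr rfl fun x _ => ?_
  rw [h x]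
  simp

lemma key_count {n : ℕ} (S : Finset (Fin n)) (y : Fin n → ZMod 2) :
    ∑ S' ∈ S.powerset, (-1:ℤ)^((∑ j ∈ S', y j).val)
      = if ∀ j ∈ S, y j = 0 then (2:ℤ)^S.card else 0 := by
  classical
  induction S using Finset.cons_induction with
  | empty => simp
  | cons j S hj ih =>
    rw [Finset.cons_eq_insert, Finset.sum_powerset_insert hj]
    have h2 : ∑ S' ∈ S.powerset, (-1:ℤ)^((∑ k ∈ insert j S', y k).val)
        = (-1:ℤ)^((y j).val) * ∑ S' ∈ S.powerset, (-1:ℤ)^((∑ k ∈ S', y k).val) := by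
      rw [Finset.mul_sum]
      refine Finset.sum_congr rfl fun S' hS' => ?_
      have hjS' : j ∉ S' := fun h => hj (Finset.mem_powerset.mp hS' h)
      rw [Finset.sum_insert hjS', chi_add]
    rw [h2, ih]
    have hy : y j = 0 ∨ y j = 1 := by
      have : ∀ a : ZMod 2, a = 0 ∨ a = 1 := by decide
      exact this (y j)
    rcases hy with hy | hy
    · have hcard : (insert j S).card = S.card + 1 := Finset.card_insert_of_notMem hj
      by_cases hall : ∀ k ∈ S, y k = 0
      · have hall' : ∀ k ∈ insert j S, y k = 0 := by
          intro k hk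
          rcases Finset.mem_insert.mp hk with rfl | hk
          · exact hy
          · exact hall k hk
        rw [if_pos hall, if_pos hall', hcard, hy, pow_succ]
        simp
        ring
      · have hall' : ¬ ∀ k ∈ insert j S, y k = 0 := fun h =>
          hall fun k hk => h k (Finset.mem_insert_of_mem hk)
        rw [if_neg hall, if_neg hall']
        simp
    · have hall' : ¬ ∀ k ∈ insert j S, y k = 0 := fun h => by
        have := h j (Finset.mem_insert_self j S)
        rw [hy] at this
        exact one_ne_zero this
      rw [if_neg hall', hy]
      have hv1 : (1 : ZMod 2).val = 1 := by decide
      by_cases hall : ∀ k ∈ S, y k = 0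
      · rw [if_pos hall, hv1]
        ring
      · rw [if_neg hall]
        ring

lemma sum_chi_zero {n : ℕ} (S : Finset (Fin n)) (c : Fin n → ZMod 2) (j₀ : Fin n)
    (hj₀ : j₀ ∈ S) (hc : c j₀ ≠ 0) :
    ∑ a ∈ Finset.univ.filter (fun a : Fin n → ZMod 2 => ∀ j, j ∉ S → a j = 0),
      (-1:ℤ)^((dotp c a).val) = 0 := by
  classical
  have hc1 : c j₀ = 1 := by
    have : ∀ u : ZMod 2, u ≠ 0 → u = 1 := by decide
    exact this _ hc
  refine Finset.sum_involution (fun a _ => Function.update a j₀ (a j₀ + 1)) ?_ ?_ ?_ ?_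
  · intro a ha
    have hupd : ∀ j, Function.update a j₀ (a j₀ + 1) j = a j + (if j = j₀ then 1 else 0) := by
      intro j
      rcases eq_or_ne j j₀ with rfl | h
      · simp
      · simp [Function.update_of_ne h, h]
    have hdot : dotp c (Function.update a j₀ (a j₀ + 1)) = dotp c a + 1 := by
      unfold dotp
      simp only [hupd, mul_add]
      rw [Finset.sum_add_distrib]
      congr 1
      simp only [mul_ite, mul_one, mul_zero]
      rw [Finset.sum_ite_eq' Finset.univ j₀ c]
      simp [hc1]
    rw [hdot, chi_add_one]
    ring
  · intro a ha h heq
    have h1 := congrFun heq j₀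
    simp only [Function.update_self] at h1
    nth_rewrite 2 [← add_zero (a j₀)] at h1
    exact one_ne_zero (add_left_cancel h1)
  · intro a ha
    simp only [Finset.mem_filter, Finset.mem_univ, true_and] at ha ⊢
    intro j hj
    have hne : j ≠ j₀ := fun h => hj (h ▸ hj₀)
    rw [Function.update_of_ne hne]
    exact ha j hj
  · intro a ha
    have h2 : a j₀ + 1 + 1 = a j₀ := by
      have h11 : (1:ZMod 2) + 1 = 0 := by decide
      rw [add_assoc, h11, add_zero]
    simp [Function.update_idem, h2, Function.update_eq_self]

lemma CI_of_W {n t : ℕ} {A : Type*} [DecidableEq A] (f : (Fin n → ZMod 2) → A)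
    (hW : ∀ c : Fin n → ZMod 2, 1 ≤ wt c → wt c ≤ t → ∀ α, W f c α = 0) : CI t f := by
  classical
  intro S hS a α
  have key : ∀ x : Fin n → ZMod 2,
      ((2:ℤ)^t) * (if f x = α ∧ ∀ j ∈ S, x j = a j then 1 else 0)
        = ∑ S' ∈ S.powerset, (if f x = α then (-1:ℤ)^((∑ j ∈ S', (x j + a j)).val) else 0) := by
    intro x
    by_cases hfx : f x = α
    · simp only [hfx, if_true, true_and]
      rw [key_count S (fun j => x j + a j)]
      have hiff : (∀ j ∈ S, x j + a j = 0) ↔ (∀ j ∈ S, x j = a j) := by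
        constructor <;> intro h j hj
        · exact (zmod2_add_eq_zero _ _).mp (h j hj)
        · exact (zmod2_add_eq_zero _ _).mpr (h j hj)
      rw [if_congr hiff rfl rfl, hS]
      by_cases hall : ∀ j ∈ S, x j = a j
      · rw [if_pos hall, if_pos hall, mul_one]
      · rw [if_neg hall, if_neg hall, mul_zero]
    · simp [hfx]
  -- sum over all x
  have main : ((2:ℤ)^t) * (Nat.card {x : Fin n → ZMod 2 // f x = α ∧ ∀ j ∈ S, x j = a j} : ℤ)
      = (Nat.card {x : Fin n → ZMod 2 // f x = α} : ℤ) := by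
    rw [natCard_eq (fun x : Fin n → ZMod 2 => f x = α ∧ ∀ j ∈ S, x j = a j), Finset.mul_sum]
    calc ∑ x : Fin n → ZMod 2, (2:ℤ)^t * (if f x = α ∧ ∀ j ∈ S, x j = a j then 1 else 0)
        = ∑ x : Fin n → ZMod 2, ∑ S' ∈ S.powerset,
            (if f x = α then (-1:ℤ)^((∑ j ∈ S', (x j + a j)).val) else 0) :=
          Finset.sum_congr rfl fun x _ => key x
      _ = ∑ S' ∈ S.powerset, ∑ x : Fin n → ZMod 2,
            (if f x = α then (-1:ℤ)^((∑ j ∈ S', (x j + a j)).val) else 0) := Finset.sum_comm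
      _ = ∑ S' ∈ S.powerset, (-1:ℤ)^((∑ j ∈ S', a j).val) * W f (ind S') α := by
          refine Finset.sum_congr rfl fun S' _ => ?_
          rw [W, Finset.mul_sum]
          refine Finset.sum_congr rfl fun x _ => ?_
          by_cases hfx : f x = α
          · rw [if_pos hfx, if_pos hfx, dotp_ind]
            rw [Finset.sum_add_distrib, chi_add, chi_sum, chi_sum]
            exact mul_comm _ _
          · rw [if_neg hfx, if_neg hfx, mul_zero]
      _ = (-1:ℤ)^((∑ j ∈ (∅ : Finset (Fin n)), a j).val) * W f (ind ∅) α := by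
          refine Finset.sum_eq_single_of_mem ∅ (Finset.empty_mem_powerset S) fun S' hS' hne => ?_
          have h1 : 1 ≤ wt (ind S') := by
            rw [wt_ind]
            exact Finset.card_pos.mpr (Finset.nonempty_iff_ne_empty.mpr hne)
          have h2 : wt (ind S') ≤ t := by
            rw [wt_ind]
            exact le_trans (Finset.card_le_card (Finset.mem_powerset.mp hS')) (le_of_eq hS)
          rw [hW _ h1 h2 α, mul_zero]
      _ = (Nat.card {x : Fin n → ZMod 2 // f x = α} : ℤ) := by
          rw [ind_empty, W_zero_eq]
          simp
  exact_mod_cast main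

lemma W_eq_zero_of_CI {n t : ℕ} {A : Type*} [DecidableEq A] (f : (Fin n → ZMod 2) → A)
    (hCI : CI t f) (htn : t ≤ n) (c : Fin n → ZMod 2)
    (h1 : 1 ≤ wt c) (h2 : wt c ≤ t) (α : A) : W f c α = 0 := by
  classical
  obtain ⟨S, hsub, hcard⟩ := Finset.exists_superset_card_eq
    (show (Finset.univ.filter fun j => c j ≠ 0).card ≤ t from h2)
    (by simpa [Fintype.card_fin] using htn)
  obtain ⟨j₀, hj₀mem⟩ := Finset.card_pos.mp (show 0 < (Finset.univ.filter fun j => c j ≠ 0).card from h1)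
  have hcj₀ : c j₀ ≠ 0 := (Finset.mem_filter.mp hj₀mem).2
  have hj₀S : j₀ ∈ S := hsub hj₀mem
  set T : Finset (Fin n → ZMod 2) :=
    Finset.univ.filter (fun a : Fin n → ZMod 2 => ∀ j, j ∉ S → a j = 0) with hT
  set P : (Fin n → ZMod 2) → (Fin n → ZMod 2) := fun x j => if j ∈ S then x j else 0 with hP
  have hmaps : ∀ x : Fin n → ZMod 2, x ∈ Finset.univ → P x ∈ T := by
    intro x _
    simp only [hT, Finset.mem_filter, Finset.mem_univ, true_and]
    intro j hj
    simp [hP, hj]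
  have hfiber : ∀ a ∈ T, ∀ x : Fin n → ZMod 2, (P x = a ↔ ∀ j ∈ S, x j = a j) := by
    intro a ha x
    simp only [hT, Finset.mem_filter, Finset.mem_univ, true_and] at ha
    constructor
    · intro h j hj
      have := congrFun h j
      simpa [hP, hj] using this
    · intro h
      funext j
      by_cases hj : j ∈ S
      · simpa [hP, hj] using h j hj
      · simp [hP, hj, (ha j hj).symm]
  have step1 : W f c α = ∑ a ∈ T, ∑ x ∈ Finset.univ.filter (fun x => P x = a),
      (if f x = α then (-1:ℤ)^((dotp c x).val) else 0) :=
    (Finset.sum_fiberwise_of_maps_to hmaps _).symm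
  have step2 : ∀ a ∈ T, ∑ x ∈ Finset.univ.filter (fun x => P x = a),
      (if f x = α then (-1:ℤ)^((dotp c x).val) else 0)
      = (-1:ℤ)^((dotp c a).val)
        * (Nat.card {x : Fin n → ZMod 2 // f x = α ∧ ∀ j ∈ S, x j = a j} : ℤ) := by
    intro a ha
    have hdotp : ∀ x : Fin n → ZMod 2, (∀ j ∈ S, x j = a j) → dotp c x = dotp c a := by
      intro x hx
      unfold dotp
      refine Finset.sum_congr rfl fun j _ => ?_
      by_cases hcj : c j = 0
      · rw [hcj, zero_mul, zero_mul]
      · have hjS : j ∈ S := hsub (Finset.mem_filter.mpr ⟨Finset.mem_univ j, hcj⟩)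
        rw [hx j hjS]
    rw [natCard_eq (fun x : Fin n → ZMod 2 => f x = α ∧ ∀ j ∈ S, x j = a j), Finset.mul_sum]
    rw [Finset.sum_filter]
    refine Finset.sum_congr rfl fun x _ => ?_
    rw [if_congr (hfiber a ha x) rfl rfl]
    by_cases hx : ∀ j ∈ S, x j = a j
    · rw [if_pos hx]
      by_cases hfx : f x = α
      · rw [if_pos hfx, if_pos ⟨hfx, hx⟩, hdotp x hx, mul_one]
      · rw [if_neg hfx, if_neg (fun h => hfx h.1), mul_zero]
    · rw [if_neg hx, if_neg (fun h => hx h.2), mul_zero]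
  have hCIeq : ∀ a : Fin n → ZMod 2,
      ((2:ℤ)^t) * (Nat.card {x : Fin n → ZMod 2 // f x = α ∧ ∀ j ∈ S, x j = a j} : ℤ)
        = (Nat.card {x : Fin n → ZMod 2 // f x = α} : ℤ) := by
    intro a
    exact_mod_cast congrArg (Nat.cast : ℕ → ℤ) (hCI S hcard a α)
  have main : (2:ℤ)^t * W f c α
      = (Nat.card {x : Fin n → ZMod 2 // f x = α} : ℤ) * ∑ a ∈ T, (-1:ℤ)^((dotp c a).val) := by
    rw [step1, Finset.mul_sum, Finset.mul_sum]
    refine Finset.sum_congr rfl fun a ha => ?_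
    rw [step2 a ha, ← mul_assoc, mul_comm ((2:ℤ)^t) _, mul_assoc, hCIeq a, mul_comm]
  rw [sum_chi_zero S c j₀ hj₀S hcj₀, mul_zero] at main
  have h2t : (2:ℤ)^t ≠ 0 := pow_ne_zero _ (by norm_num)
  rcases mul_eq_zero.mp main with h | h
  · exact absurd h h2t
  · exact h

/-- Signed count of `x` with `(f x).val ≡ r (mod 2^i)`. -/
def V {n M : ℕ} (f : (Fin n → ZMod 2) → ZMod M) (i r : ℕ) (c : Fin n → ZMod 2) : ℤ :=
  ∑ x : Fin n → ZMod 2, if (f x).val % 2^i = r then (-1:ℤ)^((dotp c x).val) else 0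

lemma V_eq_sum_W {n M : ℕ} [NeZero M] (f : (Fin n → ZMod 2) → ZMod M) (i r : ℕ)
    (c : Fin n → ZMod 2) :
    V f i r c = ∑ α ∈ Finset.univ.filter (fun α : ZMod M => α.val % 2^i = r), W f c α := by
  unfold V W
  rw [Finset.sum_comm]
  refine Finset.sum_congr rfl fun x _ => ?_
  rw [Finset.sum_ite_eq (Finset.univ.filter (fun α : ZMod M => α.val % 2^i = r)) (f x)
    (fun _ => (-1:ℤ)^((dotp c x).val))]
  by_cases h : (f x).val % 2^i = r
  · have hmem : f x ∈ Finset.univ.filter (fun α : ZMod M => α.val % 2^i = r) := by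
      simp [Finset.mem_filter, h]
    rw [if_pos h, if_pos hmem]
  · have hmem : f x ∉ Finset.univ.filter (fun α : ZMod M => α.val % 2^i = r) := by
      simp [Finset.mem_filter, h]
    rw [if_neg h, if_neg hmem]

lemma V_big {n M : ℕ} (f : (Fin n → ZMod 2) → ZMod M) {i r : ℕ} (hr : 2^i ≤ r)
    (c : Fin n → ZMod 2) : V f i r c = 0 := by
  refine Finset.sum_eq_zero fun x _ => ?_
  have : (f x).val % 2^i < 2^i := Nat.mod_lt _ (by positivity)
  rw [if_neg (by omega)]

lemma V_zero_eq {n M : ℕ} (f : (Fin n → ZMod 2) → ZMod M) (c : Fin n → ZMod 2)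
    (j₀ : Fin n) (hc : c j₀ ≠ 0) : V f 0 0 c = 0 := by
  have h := sum_chi_zero (Finset.univ : Finset (Fin n)) c j₀ (Finset.mem_univ _) hc
  simp only [Finset.mem_univ, not_true_eq_false, false_implies, implies_true,
    Finset.filter_true_of_mem, fun _ => trivial] at h
  unfold V
  simp only [pow_zero, Nat.mod_one, if_pos rfl]
  simpa using h

lemma V_split {n M : ℕ} (f : (Fin n → ZMod 2) → ZMod M) (i r : ℕ) (hr : r < 2^i)
    (c : Fin n → ZMod 2) :
    V f i r c = V f (i+1) r c + V f (i+1) (r + 2^i) c := by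
  unfold V
  rw [← Finset.sum_add_distrib]
  refine Finset.sum_congr rfl fun x _ => ?_
  have hpos : 0 < 2^i := by positivity
  have hps : 2^(i+1) = 2^i + 2^i := by ring
  obtain ⟨w, hw⟩ : ∃ w, (f x).val % 2^(i+1) = w := ⟨_, rfl⟩
  have h1 : (f x).val % 2^i = w % 2^i := by
    rw [← hw, Nat.mod_mod_of_dvd _ ⟨2, by ring⟩]
  have hwlt : w < 2^(i+1) := hw ▸ Nat.mod_lt _ (by positivity)
  have h3 := Nat.div_add_mod w (2^i)
  have h4 : w % 2^i < 2^i := Nat.mod_lt _ hpos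
  have h2 : w / 2^i < 2 := Nat.div_lt_of_lt_mul (by rw [← pow_succ]; exact hwlt)
  have hsplit : ((f x).val % 2^i = r) ↔ (w = r ∨ w = r + 2^i) := by
    rw [h1]
    constructor
    · intro hmod
      have h0 : w / 2^i = 0 ∨ w / 2^i = 1 := by
        interval_cases h : w / 2^i
        · exact Or.inl rfl
        · exact Or.inr rfl
      rcases h0 with h0 | h0 <;> rw [h0] at h3 <;> omega
    · rintro (rfl | h0)
      · exact Nat.mod_eq_of_lt hr
      · rw [h0, Nat.add_mod_right]
        exact Nat.mod_eq_of_lt hr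
  rw [hw]
  by_cases hA : w = r
  · have hB : ¬ w = r + 2^i := by omega
    rw [if_pos (hsplit.mpr (Or.inl hA)), if_pos hA, if_neg hB, add_zero]
  · by_cases hB : w = r + 2^i
    · rw [if_pos (hsplit.mpr (Or.inr hB)), if_neg hA, if_pos hB, zero_add]
    · have hC : ¬ (f x).val % 2^i = r := fun h => by
        rcases hsplit.mp h with h | h
        exacts [hA h, hB h]
      rw [if_neg hC, if_neg hA, if_neg hB, add_zero]

lemma omega_pow_two_pow (i : ℕ) : ω i ^ (2^i) = 1 := by
  unfold ω
  rw [show ((2:ℕ)^i : ℕ) = ((2^i : ℕ) : ℕ) from rfl, ← Complex.exp_nat_mul]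
  rw [show (((2^i : ℕ) : ℂ)) * (2 * (Real.pi : ℂ) * Complex.I / 2 ^ i)
      = 2 * (Real.pi : ℂ) * Complex.I from ?_]
  · exact Complex.exp_two_pi_mul_I
  · have h2 : ((2:ℂ))^i ≠ 0 := pow_ne_zero _ (by norm_num)
    push_cast
    field_simp

lemma omega_pow_mod (i v : ℕ) : ω i ^ (v % 2^i) = ω i ^ v := by
  conv_rhs => rw [← Nat.div_add_mod v (2^i)]
  rw [pow_add, pow_mul, omega_pow_two_pow, one_pow, one_mul]

lemma omega_pow_half (i : ℕ) : ω (i+1) ^ (2^i) = -1 := by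
  unfold ω
  rw [show ((2:ℕ)^i : ℕ) = ((2^i : ℕ) : ℕ) from rfl, ← Complex.exp_nat_mul]
  rw [show (((2^i : ℕ) : ℂ)) * (2 * (Real.pi : ℂ) * Complex.I / 2 ^ (i+1))
      = (Real.pi : ℂ) * Complex.I from ?_]
  · exact Complex.exp_pi_mul_I
  · have h2 : ((2:ℂ))^i ≠ 0 := pow_ne_zero _ (by norm_num)
    push_cast
    rw [pow_succ]
    field_simp

lemma omega_prim (i : ℕ) : IsPrimitiveRoot (ω i) (2^i) := by
  have h := Complex.isPrimitiveRoot_exp (2^i) (by positivity)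
  have hc : (((2:ℕ)^i : ℕ) : ℂ) = (2:ℂ)^i := by push_cast; ring
  rw [hc] at h
  exact h

lemma walsh_eq {n M : ℕ} (f : (Fin n → ZMod 2) → ZMod M) (i : ℕ) (c : Fin n → ZMod 2) :
    ∑ x : Fin n → ZMod 2, ω i ^ (f x).val * (-1:ℂ)^((dotp c x).val)
      = ∑ r ∈ Finset.range (2^i), (V f i r c : ℤ) * ω i ^ r := by
  have hV : ∀ r, ((V f i r c : ℤ) : ℂ)
      = ∑ x : Fin n → ZMod 2, if (f x).val % 2^i = r then (-1:ℂ)^((dotp c x).val) else 0 := by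
    intro r
    unfold V
    push_cast
    rfl
  calc ∑ x : Fin n → ZMod 2, ω i ^ (f x).val * (-1:ℂ)^((dotp c x).val)
      = ∑ x : Fin n → ZMod 2, ∑ r ∈ Finset.range (2^i),
          (if (f x).val % 2^i = r then (-1:ℂ)^((dotp c x).val) else 0) * ω i ^ r := by
        refine Finset.sum_congr rfl fun x _ => ?_
        simp only [ite_mul, zero_mul]
        rw [Finset.sum_ite_eq (Finset.range (2^i)) ((f x).val % 2^i)
          (fun r => (-1:ℂ)^((dotp c x).val) * ω i ^ r)]
        rw [if_pos (Finset.mem_range.mpr (Nat.mod_lt _ (by positivity)))]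
        rw [omega_pow_mod]
        ring
    _ = ∑ r ∈ Finset.range (2^i), ∑ x : Fin n → ZMod 2,
          (if (f x).val % 2^i = r then (-1:ℂ)^((dotp c x).val) else 0) * ω i ^ r :=
        Finset.sum_comm
    _ = ∑ r ∈ Finset.range (2^i), (V f i r c : ℤ) * ω i ^ r := by
        refine Finset.sum_congr rfl fun r _ => ?_
        rw [hV r, Finset.sum_mul]

lemma lin_indep {i : ℕ} (a : ℕ → ℤ)
    (h : ∑ r ∈ Finset.range (2^i), ((a r : ℤ) : ℂ) * ω (i+1) ^ r = 0) :
    ∀ r ∈ Finset.range (2^i), a r = 0 := by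
  classical
  have hprim := omega_prim (i+1)
  have hmin : minpoly ℚ (ω (i+1)) = Polynomial.cyclotomic (2^(i+1)) ℚ :=
    (Polynomial.cyclotomic_eq_minpoly_rat hprim (by positivity)).symm
  have hdegmin : (minpoly ℚ (ω (i+1))).natDegree = 2^i := by
    rw [hmin, Polynomial.natDegree_cyclotomic,
      Nat.totient_prime_pow Nat.prime_two (by omega)]
    simp
  set p : Polynomial ℚ := ∑ r ∈ Finset.range (2^i), Polynomial.C ((a r : ℚ)) * Polynomial.X ^ r
    with hp
  have hcoeff : ∀ k ∈ Finset.range (2^i), p.coeff k = (a k : ℚ) := by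
    intro k hk
    rw [hp, Polynomial.finset_sum_coeff]
    simp only [Polynomial.coeff_C_mul, Polynomial.coeff_X_pow, mul_ite, mul_one, mul_zero]
    rw [Finset.sum_ite_eq (Finset.range (2^i)) k (fun r => ((a r : ℚ)))]
    rw [if_pos hk]
  have haev : Polynomial.aeval (ω (i+1)) p = 0 := by
    rw [hp, map_sum]
    simp only [map_mul, Polynomial.aeval_C, map_pow, Polynomial.aeval_X]
    rw [← h]
    refine Finset.sum_congr rfl fun r _ => ?_
    norm_cast
  have hp0 : p = 0 := by
    by_contra hne
    have hle := minpoly.degree_le_of_ne_zero ℚ (ω (i+1)) hne haev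
    have hlt : p.degree < ((2^i : ℕ) : WithBot ℕ) := by
      rw [hp]
      apply lt_of_le_of_lt (Polynomial.degree_sum_le _ _)
      rw [Finset.sup_lt_iff (by exact WithBot.bot_lt_coe _)]
      intro r hr
      exact lt_of_le_of_lt (Polynomial.degree_C_mul_X_pow_le r _)
        (by exact_mod_cast Finset.mem_range.mp hr)
    have hne0 : minpoly ℚ (ω (i+1)) ≠ 0 :=
      hmin ▸ Polynomial.cyclotomic_ne_zero _ ℚ
    rw [Polynomial.degree_eq_natDegree hne0, hdegmin] at hle
    exact absurd (lt_of_le_of_lt hle hlt) (lt_irrefl _)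
  intro r hr
  have := hcoeff r hr
  rw [hp0] at this
  simp only [Polynomial.coeff_zero] at this
  exact_mod_cast this.symm

lemma V_all_zero {n M t : ℕ} (f : (Fin n → ZMod 2) → ZMod (2^M))
    (hyp : ∀ c : Fin n → ZMod 2, 1 ≤ wt c → wt c ≤ t → ∀ i : ℕ, 1 ≤ i → i ≤ M →
      ∑ x : Fin n → ZMod 2, ω i ^ (f x).val * (-1 : ℂ) ^ (dotp c x).val = 0) :
    ∀ i, i ≤ M → ∀ c : Fin n → ZMod 2, 1 ≤ wt c → wt c ≤ t → ∀ r, V f i r c = 0 := by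
  intro i
  induction i with
  | zero =>
      intro _ c h1 h2 r
      rcases Nat.eq_zero_or_pos r with rfl | hr
      · obtain ⟨j₀, hj₀⟩ := Finset.card_pos.mp h1
        exact V_zero_eq f c j₀ (Finset.mem_filter.mp hj₀).2
      · exact V_big f (by rw [pow_zero]; omega) c
  | succ i ih =>
      intro him c h1 h2 r
      have ihz : ∀ r', V f i r' c = 0 := ih (by omega) c h1 h2
      have hsum0 : ∀ r' < 2^i, V f (i+1) r' c + V f (i+1) (r' + 2^i) c = 0 := by
        intro r' hr'
        rw [← V_split f i r' hr' c]
        exact ihz r'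
      have hdiff0 : ∀ r' ∈ Finset.range (2^i),
          V f (i+1) r' c - V f (i+1) (r' + 2^i) c = 0 := by
        refine lin_indep (i := i) (fun r' => V f (i+1) r' c - V f (i+1) (r' + 2^i) c) ?_
        have hw := hyp c h1 h2 (i+1) (by omega) him
        rw [walsh_eq] at hw
        rw [show 2^(i+1) = 2^i + 2^i from by ring, Finset.sum_range_add] at hw
        rw [← hw, ← Finset.sum_add_distrib]
        refine Finset.sum_congr rfl fun r' hr' => ?_
        have hhalf : ω (i+1) ^ (2^i) = -1 := omega_pow_half i
        rw [pow_add, hhalf]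
        have hidx : V f (i+1) (2^i + r') c = V f (i+1) (r' + 2^i) c := by rw [Nat.add_comm (2^i) r']
        rw [hidx]
        push_cast
        ring
      have hps : 2^(i+1) = 2^i + 2^i := by ring
      rcases lt_or_ge r (2^(i+1)) with hrlt | hrge
      · rcases lt_or_ge r (2^i) with hlt | hge
        · have hA := hsum0 r hlt
          have hB := hdiff0 r (Finset.mem_range.mpr hlt)
          linarith
        · have hr' : r - 2^i < 2^i := by omega
          have hA := hsum0 (r - 2^i) hr'
          have hB := hdiff0 (r - 2^i) (Finset.mem_range.mpr hr')
          have hre : r - 2^i + 2^i = r := by omega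
          rw [hre] at hA hB
          linarith
      · exact V_big f hrge c

/-- A generalized Boolean function `f : 𝔽₂ⁿ → ℤ_{2^m}` is `t`-th order correlation-immune
iff its Walsh transform `∑_x ω_i^{f(x)} (-1)^{c·x}` vanishes for all `c` with
`1 ≤ wt(c) ≤ t` and all `1 ≤ i ≤ m`. -/
theorem stmt0 (n m t : ℕ) (hn : 0 < n) (hm : 0 < m) (ht : 0 < t) (htn : t ≤ n)
    (f : (Fin n → ZMod 2) → ZMod (2 ^ m)) :
    CI t f ↔ ∀ c : Fin n → ZMod 2, 1 ≤ wt c → wt c ≤ t → ∀ i : ℕ, 1 ≤ i → i ≤ m →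
      ∑ x : Fin n → ZMod 2, ω i ^ (f x).val * (-1 : ℂ) ^ (dotp c x).val = 0 := by
  haveI : NeZero (2^m) := ⟨by positivity⟩
  constructor
  · intro hCI c h1 h2 i hi1 him
    have hW : ∀ α, W f c α = 0 := W_eq_zero_of_CI f hCI htn c h1 h2
    have hV : ∀ r, V f i r c = 0 := fun r => by
      rw [V_eq_sum_W]
      exact Finset.sum_eq_zero fun α _ => hW α
    rw [walsh_eq]
    refine Finset.sum_eq_zero fun r _ => ?_
    rw [hV r]
    simp
  · intro hyp
    apply CI_of_W
    intro c h1 h2 α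
    have hV := V_all_zero f hyp m le_rfl c h1 h2 (α.val)
    rw [← hV]
    unfold W V
    refine Finset.sum_congr rfl fun x _ => ?_
    have hiff : (f x = α) ↔ ((f x).val % 2^m = α.val) := by
      rw [Nat.mod_eq_of_lt (ZMod.val_lt _)]
      constructor
      · intro h
        rw [h]
      · intro h
        exact ZMod.val_injective _ h
    rw [if_congr hiff rfl rfl]
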